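/- Let V = {1 − 1/n² : n a positive integer} and W = {1 − e^{−n²} : n a positive integer}, both subsets of the open unit disc D. Then there exist bounded holomorphic functions g and h on D such that g(1 − e^{−n²}) = 1 − 1/n² and h(1 − 1/n²) = 1 − e^{−n²} for every positive integer n; in particular h ∘ g restricted to W is the identity of W and g ∘ h restricted to V is the identity of V, so V and W are multiplier biholomorphic subvarieties of D. -/

import Mathlib

open Metric

set_option maxHeartbeats 1000000

noncomputable def Ffun (w : ℂ) : ℂ := Complex.sinh (Real.pi * w) / (Real.pi * w)

noncomputable def g0 (z : ℂ) : ℂ :=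
  1 + (1 - Ffun ((Complex.log (1 - z)) ^ (1/2 : ℂ))) / Complex.log (1 - z)

lemma Ffun_neg (w : ℂ) : Ffun (-w) = Ffun w := by
  simp [Ffun, mul_neg, Complex.sinh_neg, neg_div_neg_eq]

lemma Ffun_eq_of_sq_eq {w₁ w₂ : ℂ} (h : w₁ ^ 2 = w₂ ^ 2) : Ffun w₁ = Ffun w₂ := by
  rcases sq_eq_sq_iff_eq_or_eq_neg.mp h with rfl | rfl
  · rfl
  · exact Ffun_neg w₂

lemma sq_cpow_half {lam : ℂ} (h : lam ≠ 0) : (lam ^ (1/2 : ℂ)) ^ 2 = lam := by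
  rw [sq, ← Complex.cpow_add _ _ h]
  norm_num

lemma log_one_sub_ne_zero {z : ℂ} (hz : z ∈ ball (0:ℂ) 1) (h0 : z ≠ 0) :
    Complex.log (1 - z) ≠ 0 := by
  intro h
  have habs : ‖z‖ < 1 := by simpa [Complex.dist_eq] using hz
  have h1 : (1 : ℂ) - z ≠ 0 := by
    intro hc
    have : z = 1 := by linear_combination -hc
    rw [this] at habs; simp at habs
  have := Complex.exp_log h1
  rw [h] at this
  simp at this
  exact h0 (by linear_combination this)

lemma one_sub_mem_slitPlane {z : ℂ} (hz : z ∈ ball (0:ℂ) 1) :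
    (1 : ℂ) - z ∈ Complex.slitPlane := by
  have habs : ‖z‖ < 1 := by simpa [Complex.dist_eq] using hz
  have : z.re < 1 := lt_of_le_of_lt (Complex.re_le_norm z) habs
  exact Complex.mem_slitPlane_iff.mpr (Or.inl (by simp; linarith))

lemma diffAt_log_one_sub {z : ℂ} (hz : z ∈ ball (0:ℂ) 1) :
    DifferentiableAt ℂ (fun y : ℂ => Complex.log (1 - y)) z := by
  exact (Complex.differentiableAt_log (one_sub_mem_slitPlane hz)).comp z
    ((differentiableAt_const _).sub differentiableAt_id)

lemma g0_diff : DifferentiableOn ℂ g0 (ball (0:ℂ) 1 \ {0}) := by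
  intro z hz
  obtain ⟨hz1, hz0'⟩ := hz
  have hz0 : z ≠ 0 := hz0'
  have hlam : Complex.log (1 - z) ≠ 0 := log_one_sub_ne_zero hz1 hz0
  have hopen : IsOpen (ball (0:ℂ) 1 \ {0}) := isOpen_ball.sdiff isClosed_singleton
  suffices h : DifferentiableAt ℂ g0 z from h.differentiableWithinAt
  have hL : DifferentiableAt ℂ (fun y : ℂ => Complex.log (1 - y)) z := diffAt_log_one_sub hz1
  by_cases hs : Complex.log (1 - z) ∈ Complex.slitPlane
  · -- principal branch works
    have hw : DifferentiableAt ℂ (fun y : ℂ => Complex.log (1 - y) ^ (1/2 : ℂ)) z :=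
      hL.cpow (differentiableAt_const _) hs
    have hwne : Complex.log (1 - z) ^ (1/2 : ℂ) ≠ 0 := by
      intro h
      apply hlam
      rw [← sq_cpow_half hlam, h]; simp
    have hne : (Real.pi : ℂ) * (Complex.log (1 - z) ^ (1/2 : ℂ)) ≠ 0 :=
      mul_ne_zero (by exact_mod_cast Real.pi_ne_zero) hwne
    unfold g0 Ffun
    apply (differentiableAt_const _).add
    apply DifferentiableAt.div _ hL hlam
    apply (differentiableAt_const _).sub
    exact (Complex.differentiable_sinh.differentiableAt.comp z
      ((differentiableAt_const _).mul hw)).div ((differentiableAt_const _).mul hw) hne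
  · -- rotated branch
    have him : (Complex.log (1 - z)).im = 0 := by
      by_contra h
      exact hs (Complex.mem_slitPlane_iff.mpr (Or.inr h))
    have hre : (Complex.log (1 - z)).re < 0 := by
      rcases lt_trichotomy (Complex.log (1 - z)).re 0 with h | h | h
      · exact h
      · exact absurd (Complex.ext h him) hlam
      · exact absurd (Complex.mem_slitPlane_iff.mpr (Or.inl h)) hs
    have hslit2 : -(Complex.log (1 - z)) ∈ Complex.slitPlane :=
      Complex.mem_slitPlane_iff.mpr (Or.inl (by simp; linarith))
    set g2 : ℂ → ℂ := fun y =>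
      1 + (1 - Ffun (Complex.I * (-(Complex.log (1 - y))) ^ (1/2 : ℂ))) / Complex.log (1 - y)
      with hg2def
    have heq : ∀ y ∈ ball (0:ℂ) 1 \ {0}, g0 y = g2 y := by
      intro y hy
      obtain ⟨hy1, hy0'⟩ := hy
      have hylam : Complex.log (1 - y) ≠ 0 := log_one_sub_ne_zero hy1 hy0'
      have : Ffun (Complex.log (1 - y) ^ (1/2 : ℂ))
          = Ffun (Complex.I * (-(Complex.log (1 - y))) ^ (1/2 : ℂ)) := by
        apply Ffun_eq_of_sq_eq
        rw [sq_cpow_half hylam, mul_pow, Complex.I_sq, sq_cpow_half (neg_ne_zero.mpr hylam)]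
        ring
      rw [g0, hg2def, this]
    have hg2 : DifferentiableAt ℂ g2 z := by
      have hw : DifferentiableAt ℂ
          (fun y : ℂ => Complex.I * (-(Complex.log (1 - y))) ^ (1/2 : ℂ)) z := by
        exact (differentiableAt_const _).mul ((hL.neg).cpow (differentiableAt_const _) hslit2)
      have hwne : Complex.I * (-(Complex.log (1 - z))) ^ (1/2 : ℂ) ≠ 0 := by
        intro h
        apply hlam
        have : (Complex.I * (-(Complex.log (1 - z))) ^ (1/2 : ℂ)) ^ 2 = Complex.log (1 - z) := by
          rw [mul_pow, Complex.I_sq, sq_cpow_half (neg_ne_zero.mpr hlam)]; ring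
        rw [h] at this; simpa using this.symm
      have hne : (Real.pi : ℂ) * (Complex.I * (-(Complex.log (1 - z))) ^ (1/2 : ℂ)) ≠ 0 :=
        mul_ne_zero (by exact_mod_cast Real.pi_ne_zero) hwne
      simp only [hg2def, Ffun]
      apply (differentiableAt_const _).add
      apply DifferentiableAt.div _ hL hlam
      apply (differentiableAt_const _).sub
      exact (Complex.differentiable_sinh.differentiableAt.comp z
        ((differentiableAt_const _).mul hw)).div ((differentiableAt_const _).mul hw) hne
    exact hg2.congr_of_eventuallyEq
      (Filter.eventuallyEq_of_mem (hopen.mem_nhds ⟨hz1, hz0'⟩) heq)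

lemma g0_bound {z : ℂ} (hz1 : z ∈ ball (0:ℂ) 1) (hz0 : z ≠ 0) : ‖g0 z‖ ≤ 40000 := by
  have habsz : ‖z‖ < 1 := by simpa [Complex.dist_eq] using hz1
  set lam := Complex.log (1 - z) with hlamdef
  have hlam : lam ≠ 0 := log_one_sub_ne_zero hz1 hz0
  have habslam : ‖lam‖ ≠ 0 := norm_ne_zero_iff.mpr hlam
  have habslampos : 0 < ‖lam‖ := norm_pos_iff.mpr hlam
  set w : ℂ := lam ^ (1/2 : ℂ) with hwdef
  set v : ℂ := (Real.pi : ℂ) * w with hvdef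
  have hw2 : w ^ 2 = lam := sq_cpow_half hlam
  have habsw2 : ‖w‖ ^ 2 = ‖lam‖ := by
    rw [← norm_pow, hw2]
  have hwne : w ≠ 0 := by
    intro h; apply hlam; rw [← hw2, h]; simp
  have hvne : v ≠ 0 := mul_ne_zero (by exact_mod_cast Real.pi_ne_zero) hwne
  have habsv : ‖v‖ = Real.pi * ‖w‖ := by
    rw [hvdef, norm_mul, Complex.norm_real, Real.norm_eq_abs, abs_of_pos Real.pi_pos]
  have habsv2 : ‖v‖ ^ 2 = Real.pi ^ 2 * ‖lam‖ := by
    rw [habsv, mul_pow, habsw2]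
  have h1z : (1 : ℂ) - z ≠ 0 := by
    intro hc
    have : z = 1 := by linear_combination -hc
    rw [this] at habsz; simp at habsz
  -- re lam ≤ 1
  have hre_lam : lam.re ≤ 1 := by
    rw [hlamdef, Complex.log_re]
    have h2 : ‖1 - z‖ ≤ 2 := by
      calc ‖1 - z‖ ≤ ‖(1:ℂ)‖ + ‖z‖ := norm_sub_le _ _
        _ ≤ 2 := by simp; linarith
    have := Real.log_le_sub_one_of_pos (norm_pos_iff.mpr h1z)
    linarith
  -- |im lam| ≤ π/2
  have him_lam : |lam.im| ≤ Real.pi / 2 := by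
    rw [hlamdef, Complex.log_im]
    apply Complex.abs_arg_le_pi_div_two_iff.mpr
    have : z.re ≤ ‖z‖ := Complex.re_le_norm z
    simp only [Complex.sub_re, Complex.one_re]
    linarith
  -- w.re bounds
  have hwre_sq : w.re ^ 2 = (‖lam‖ + lam.re) / 2 ∧ 0 ≤ w.re := by
    have hwexp : w = Complex.exp (Complex.log lam * (1/2 : ℂ)) := by
      rw [hwdef, Complex.cpow_def_of_ne_zero hlam]
    have hre : (Complex.log lam * (1/2 : ℂ)).re = Real.log ‖lam‖ / 2 := by
      simp [Complex.mul_re, Complex.log_re]; ring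
    have him : (Complex.log lam * (1/2 : ℂ)).im = Complex.arg lam / 2 := by
      simp [Complex.mul_im, Complex.log_im]; ring
    have hwre : w.re = Real.exp (Real.log ‖lam‖ / 2) * Real.cos (Complex.arg lam / 2) := by
      rw [hwexp, Complex.exp_re, hre, him]
    constructor
    · rw [hwre, mul_pow]
      have e1 : Real.exp (Real.log ‖lam‖ / 2) ^ 2 = ‖lam‖ := by
        rw [sq, ← Real.exp_add, add_halves]
        exact Real.exp_log habslampos
      have e2 : Real.cos (lam.arg / 2) ^ 2 = 1/2 + Real.cos lam.arg / 2 := by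
        rw [Real.cos_sq, mul_div_cancel₀ _ (two_ne_zero)]
      rw [e1, e2, Complex.cos_arg hlam]
      field_simp
    · rw [hwre]
      apply mul_nonneg (Real.exp_pos _).le
      apply Real.cos_nonneg_of_mem_Icc
      constructor
      · have := Complex.neg_pi_lt_arg lam; linarith
      · have := Complex.arg_le_pi lam; linarith
  obtain ⟨hwre2, hwre0⟩ := hwre_sq
  have hA : ‖lam‖ + lam.re ≤ 8 := by
    have key : (‖lam‖ + lam.re) * (‖lam‖ - lam.re) = lam.im ^ 2 := by
      have h2 : ‖lam‖ ^ 2 = lam.re ^ 2 + lam.im ^ 2 := by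
        rw [Complex.sq_norm, Complex.normSq_apply]; ring
      nlinarith [h2]
    have him2 : lam.im ^ 2 ≤ 4 := by
      nlinarith [Real.pi_le_four, _root_.sq_abs lam.im, abs_nonneg lam.im, him_lam]
    by_contra hcon
    push_neg at hcon
    have hre_abs : lam.re ≤ ‖lam‖ := Complex.re_le_norm lam
    nlinarith [key, him2, hre_lam]
  have hwre_le : w.re ≤ 2 := by nlinarith [hwre2, hwre0, hA]
  have hvre0 : 0 ≤ v.re := by
    rw [hvdef, Complex.re_ofReal_mul]
    exact mul_nonneg Real.pi_pos.le hwre0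
  have hvre : v.re ≤ 8 := by
    rw [hvdef, Complex.re_ofReal_mul]
    nlinarith [Real.pi_le_four, Real.pi_pos, hwre0, hwre_le]
  have hsinh : ‖Complex.sinh v‖ ≤ 3000 := by
    have hdef : Complex.sinh v = (Complex.exp v - Complex.exp (-v)) / 2 := rfl
    have hstep : ‖Complex.sinh v‖ ≤ (Real.exp v.re + Real.exp (-v).re) / 2 := by
      rw [hdef, norm_div, Complex.norm_two]
      have : ‖Complex.exp v - Complex.exp (-v)‖
          ≤ ‖Complex.exp v‖ + ‖Complex.exp (-v)‖ := norm_sub_le _ _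
      rw [Complex.norm_exp, Complex.norm_exp] at this
      linarith
    have hexp8 : Real.exp v.re ≤ 3000 := by
      have h1 : Real.exp v.re ≤ Real.exp 8 := Real.exp_le_exp.mpr hvre
      have h2 : Real.exp 8 = Real.exp 1 ^ (8 : ℕ) := by
        rw [← Real.exp_nat_mul]; norm_num
      have h3 : Real.exp 1 ^ (8 : ℕ) ≤ 2.7182818286 ^ (8 : ℕ) :=
        pow_le_pow_left₀ (Real.exp_pos 1).le Real.exp_one_lt_d9.le 8
      have h4 : (2.7182818286 : ℝ) ^ (8 : ℕ) ≤ 3000 := by norm_num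
      linarith
    have hexpneg : Real.exp (-v).re ≤ Real.exp v.re := by
      rw [Complex.neg_re]
      exact Real.exp_le_exp.mpr (by linarith)
    linarith
  have hvpos : 0 < ‖v‖ := norm_pos_iff.mpr hvne
  have hg0 : g0 z = 1 + (1 - Ffun w) / lam := rfl
  have hFv : Ffun w = Complex.sinh v / v := rfl
  rw [hg0]
  have htri : ‖1 + (1 - Ffun w) / lam‖
      ≤ 1 + ‖(1 - Ffun w) / lam‖ := by
    simpa using norm_add_le (1:ℂ) ((1 - Ffun w) / lam)
  have hdef' : Complex.sinh v = (Complex.exp v - Complex.exp (-v)) / 2 := rfl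
  clear_value v w lam
  clear hlamdef hwdef hvdef
  rcases le_or_gt ‖lam‖ (1/10) with hcase | hcase
  · -- small lam
    have hv1 : ‖v‖ ≤ 1 := by
      nlinarith [habsv2, norm_nonneg v, Real.pi_lt_d2, Real.pi_pos]
    have hP : ∑ m ∈ Finset.range 3, v ^ m / (m.factorial : ℂ) = 1 + v + v ^ 2 / 2 := by
      simp [Finset.sum_range_succ]
      try ring
    have hP2 : ∑ m ∈ Finset.range 3, (-v) ^ m / (m.factorial : ℂ) = 1 - v + v ^ 2 / 2 := by
      simp [Finset.sum_range_succ]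
      try ring
    have hb1 := Complex.exp_bound (x := v) hv1 (n := 3) (by norm_num)
    have hb2 := Complex.exp_bound (x := -v) (by simpa using hv1) (n := 3) (by norm_num)
    rw [hP] at hb1
    rw [hP2] at hb2
    simp only [norm_neg] at hb2
    have hb1' : ‖Complex.exp v - (1 + v + v ^ 2 / 2)‖ ≤ 2/9 * ‖v‖ ^ 3 :=
      le_of_le_of_eq hb1 (by norm_num [Nat.factorial]; ring)
    have hb2' : ‖Complex.exp (-v) - (1 - v + v ^ 2 / 2)‖ ≤ 2/9 * ‖v‖ ^ 3 :=
      le_of_le_of_eq hb2 (by norm_num [Nat.factorial]; ring)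
    have hsv : Complex.sinh v - v = ((Complex.exp v - (1 + v + v ^ 2 / 2))
        - (Complex.exp (-v) - (1 - v + v ^ 2 / 2))) / 2 := by
      rw [hdef']
      ring
    have hsub : ‖Complex.sinh v - v‖ ≤ (2/9) * ‖v‖ ^ 3 := by
      rw [hsv, norm_div, Complex.norm_two]
      have htr : ‖(Complex.exp v - (1 + v + v ^ 2 / 2))
          - (Complex.exp (-v) - (1 - v + v ^ 2 / 2))‖
          ≤ ‖Complex.exp v - (1 + v + v ^ 2 / 2)‖
            + ‖Complex.exp (-v) - (1 - v + v ^ 2 / 2)‖ := by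
        exact norm_sub_le _ _
      have hv3 : 0 ≤ ‖v‖ ^ 3 := by positivity
      linarith
    have hFf : (1 : ℂ) - Ffun w = (v - Complex.sinh v) / v := by
      rw [hFv]
      field_simp
    have habsT : ‖(1 - Ffun w) / lam‖ ≤ 3 := by
      rw [norm_div, hFf, norm_div]
      rw [div_div, div_le_iff₀ (by positivity)]
      have h1 : ‖v - Complex.sinh v‖ ≤ (2/9) * ‖v‖ ^ 3 := by
        rw [show v - Complex.sinh v = -(Complex.sinh v - v) by ring, norm_neg]
        exact hsub
      have hpi2 : Real.pi ^ 2 ≤ 10 := by nlinarith [Real.pi_lt_d2, Real.pi_pos]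
      calc ‖v - Complex.sinh v‖ ≤ 2/9 * ‖v‖ ^ 3 := h1
        _ = 2/9 * (‖v‖ ^ 2) * ‖v‖ := by ring
        _ = 2/9 * (Real.pi ^ 2 * ‖lam‖) * ‖v‖ := by rw [habsv2]
        _ ≤ 3 * (‖v‖ * ‖lam‖) := by
            nlinarith [mul_pos hvpos habslampos, hpi2, hvpos, habslampos]
    linarith
  · -- large lam
    have hvlow : (0.9 : ℝ) ≤ ‖v‖ ^ 2 := by
      nlinarith [habsv2, Real.pi_gt_three]
    have hvlow' : (0.9 : ℝ) ≤ ‖v‖ := by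
      nlinarith [norm_nonneg v]
    have hF : ‖Ffun w‖ ≤ 3334 := by
      rw [hFv, norm_div, div_le_iff₀ hvpos]
      nlinarith [hsinh, hvlow']
    have habsT : ‖(1 - Ffun w) / lam‖ ≤ 33350 := by
      rw [norm_div, div_le_iff₀ habslampos]
      have h1 : ‖1 - Ffun w‖ ≤ 1 + ‖Ffun w‖ := by
        simpa using norm_sub_le (1:ℂ) (Ffun w)
      nlinarith [hF, h1, hcase]
    linarith

lemma g0_node {n : ℕ} (hn : 1 ≤ n) :
    g0 (((1 - Real.exp (-((n : ℝ) ^ 2)) : ℝ) : ℂ)) = 1 - 1 / (n : ℂ) ^ 2 := by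
  have hn0 : (n : ℂ) ≠ 0 := Nat.cast_ne_zero.mpr (by omega)
  have hsq : -((n : ℂ) ^ 2) ≠ 0 := by simpa using pow_ne_zero 2 hn0
  have hlog : Complex.log (1 - (((1 - Real.exp (-((n : ℝ) ^ 2)) : ℝ) : ℂ)))
      = -((n : ℂ) ^ 2) := by
    have h1 : (1 : ℂ) - (((1 - Real.exp (-((n : ℝ) ^ 2)) : ℝ) : ℂ))
        = ((Real.exp (-((n : ℝ) ^ 2)) : ℝ) : ℂ) := by push_cast; ring
    rw [h1, ← Complex.ofReal_log (Real.exp_pos _).le, Real.log_exp]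
    push_cast; ring
  have hF : Ffun ((-((n : ℂ) ^ 2)) ^ (1/2 : ℂ)) = 0 := by
    have h2 : ((-((n : ℂ) ^ 2)) ^ (1/2 : ℂ)) ^ 2 = (Complex.I * n) ^ 2 := by
      rw [sq_cpow_half hsq, mul_pow, Complex.I_sq]; ring
    rw [Ffun_eq_of_sq_eq h2, Ffun]
    have : (Real.pi : ℂ) * (Complex.I * n) = ((n : ℂ) * Real.pi) * Complex.I := by ring
    rw [this, Complex.sinh_mul_I]
    have : Complex.sin ((n : ℂ) * Real.pi) = 0 := Complex.sin_nat_mul_pi n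
    rw [this]; simp
  rw [g0, hlog, hF]
  field_simp
  ring

/-- The sequences `V = {1 − 1/n²}` and `W = {1 − e^{−n²}}` in the unit disc are multiplier
biholomorphic: there are bounded holomorphic functions `g, h` on the disc with
`g(1 − e^{−n²}) = 1 − 1/n²` and `h(1 − 1/n²) = 1 − e^{−n²}` for all `n ≥ 1`; in particular
`h ∘ g` is the identity on `W` and `g ∘ h` is the identity on `V`. -/
theorem blaschke_sequences_multiplier_biholomorphic
    (V W : Set ℂ)
    (hV : V = {x : ℂ | ∃ n : ℕ, 1 ≤ n ∧ x = 1 - 1 / (n : ℂ) ^ 2})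
    (hW : W = {x : ℂ | ∃ n : ℕ, 1 ≤ n ∧
      x = ((1 - Real.exp (-((n : ℝ) ^ 2)) : ℝ) : ℂ)}) :
    ∃ g h : ℂ → ℂ,
      DifferentiableOn ℂ g (ball (0 : ℂ) 1) ∧
      (∃ C : ℝ, ∀ z ∈ ball (0 : ℂ) 1, ‖g z‖ ≤ C) ∧
      DifferentiableOn ℂ h (ball (0 : ℂ) 1) ∧
      (∃ C : ℝ, ∀ z ∈ ball (0 : ℂ) 1, ‖h z‖ ≤ C) ∧
      (∀ n : ℕ, 1 ≤ n →
        g (((1 - Real.exp (-((n : ℝ) ^ 2)) : ℝ) : ℂ)) = 1 - 1 / (n : ℂ) ^ 2 ∧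
        h (1 - 1 / (n : ℂ) ^ 2) = ((1 - Real.exp (-((n : ℝ) ^ 2)) : ℝ) : ℂ)) ∧
      (∀ w ∈ W, h (g w) = w) ∧ (∀ v ∈ V, g (h v) = v) := by
  classical
  have hball : ball (0 : ℂ) 1 ∈ nhds (0 : ℂ) := isOpen_ball.mem_nhds (by simp)
  have hbdd : BddAbove ((norm ∘ g0) '' (ball (0:ℂ) 1 \ {0})) := by
    refine ⟨40000, ?_⟩
    rintro x ⟨y, hy, rfl⟩
    exact g0_bound hy.1 hy.2
  have hgdiff := Complex.differentiableOn_update_limUnder_of_bddAbove hball g0_diff hbdd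
  set g : ℂ → ℂ := Function.update g0 0 (Filter.limUnder (nhdsWithin 0 {(0:ℂ)}ᶜ) g0) with hgdef
  set h : ℂ → ℂ := fun z => 1 - Complex.exp ((z - 1)⁻¹) with hhdef
  have hgne : ∀ z : ℂ, z ≠ 0 → g z = g0 z := by
    intro z hz
    exact Function.update_of_ne hz _ _
  -- membership facts for nodes
  have hnode_pos : ∀ n : ℕ, 1 ≤ n → 0 < 1 - Real.exp (-((n : ℝ) ^ 2)) := by
    intro n hn
    have hn' : (0:ℝ) < (n:ℝ) ^ 2 := by positivity
    have := Real.exp_lt_one_iff.mpr (by linarith : -((n : ℝ) ^ 2) < 0)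
    linarith
  have hgnode : ∀ n : ℕ, 1 ≤ n →
      g (((1 - Real.exp (-((n : ℝ) ^ 2)) : ℝ) : ℂ)) = 1 - 1 / (n : ℂ) ^ 2 := by
    intro n hn
    have hne : (((1 - Real.exp (-((n : ℝ) ^ 2)) : ℝ) : ℂ)) ≠ 0 :=
      Complex.ofReal_ne_zero.mpr (ne_of_gt (hnode_pos n hn))
    rw [hgne _ hne]
    exact g0_node hn
  -- bound for g
  have hgbound : ∀ z ∈ ball (0:ℂ) 1, ‖g z‖ ≤ 40000 := by
    intro z hz
    by_cases h0 : z = 0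
    · subst h0
      have hc : ContinuousAt g 0 := (hgdiff.differentiableAt hball).continuousAt
      set u : ℕ → ℂ := fun k => ((((k:ℝ)+1)⁻¹/2 : ℝ) : ℂ) with hudef
      have hu0 : Filter.Tendsto u Filter.atTop (nhds (0:ℂ)) := by
        have h1 : Filter.Tendsto (fun k : ℕ => ((k:ℝ)+1)⁻¹/2) Filter.atTop (nhds 0) := by
          simpa using (tendsto_one_div_add_atTop_nhds_zero_nat (𝕜 := ℝ)).div_const 2
        have h2 := (Complex.continuous_ofReal.tendsto 0).comp h1
        simpa [hudef, Function.comp_def] using h2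
      have hmem : ∀ k : ℕ, u k ∈ ball (0:ℂ) 1 ∧ u k ≠ 0 := by
        intro k
        have hk1 : (0:ℝ) < ((k:ℝ)+1)⁻¹/2 := by positivity
        have hk2 : ((k:ℝ)+1)⁻¹/2 < 1 := by
          have h3 : ((k:ℝ)+1)⁻¹ ≤ 1 := by
            rw [inv_le_one_iff₀]
            right
            simp
          linarith
        constructor
        · simp only [hudef, mem_ball_zero_iff, Complex.norm_real, Real.norm_eq_abs]
          rw [abs_of_pos hk1]
          exact hk2
        · exact Complex.ofReal_ne_zero.mpr (ne_of_gt hk1)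
      have htend : Filter.Tendsto (fun k => ‖g (u k)‖) Filter.atTop (nhds ‖g 0‖) :=
        (hc.tendsto.comp hu0).norm
      refine le_of_tendsto htend (Filter.Eventually.of_forall fun k => ?_)
      rw [hgne _ (hmem k).2]
      exact g0_bound (hmem k).1 (hmem k).2
    · rw [hgne _ h0]
      exact g0_bound hz h0
  -- h facts
  have hzne1 : ∀ z ∈ ball (0:ℂ) 1, z - 1 ≠ 0 := by
    intro z hz hc
    have habs : ‖z‖ < 1 := by simpa [Complex.dist_eq] using hz
    have : z = 1 := by linear_combination hc
    rw [this] at habs; simp at habs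
  have hhdiff : DifferentiableOn ℂ h (ball (0:ℂ) 1) := by
    intro z hz
    apply DifferentiableAt.differentiableWithinAt
    apply (differentiableAt_const _).sub
    apply DifferentiableAt.cexp
    exact (differentiableAt_id.sub (differentiableAt_const _)).inv (hzne1 z hz)
  have hhbound : ∀ z ∈ ball (0:ℂ) 1, ‖h z‖ ≤ 2 := by
    intro z hz
    have habs : ‖z‖ < 1 := by simpa [Complex.dist_eq] using hz
    have hre : ((z - 1)⁻¹).re ≤ 0 := by
      rw [Complex.inv_re]
      apply div_nonpos_of_nonpos_of_nonneg
      · simp only [Complex.sub_re, Complex.one_re]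
        have := Complex.re_le_norm z
        linarith
      · exact Complex.normSq_nonneg _
    have hexp : ‖Complex.exp ((z - 1)⁻¹)‖ ≤ 1 := by
      rw [Complex.norm_exp]
      exact Real.exp_le_one_iff.mpr hre
    calc ‖h z‖ = ‖1 - Complex.exp ((z - 1)⁻¹)‖ := rfl
      _ ≤ ‖(1:ℂ)‖ + ‖Complex.exp ((z - 1)⁻¹)‖ := norm_sub_le _ _
      _ ≤ 2 := by rw [norm_one]; linarith
  have hhnode : ∀ n : ℕ, 1 ≤ n →
      h (1 - 1 / (n : ℂ) ^ 2) = ((1 - Real.exp (-((n : ℝ) ^ 2)) : ℝ) : ℂ) := by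
    intro n hn
    have hn0 : (n : ℂ) ≠ 0 := Nat.cast_ne_zero.mpr (by omega)
    have harg : ((1 - 1 / (n : ℂ) ^ 2) - 1)⁻¹ = -((n : ℂ) ^ 2) := by
      field_simp
      ring
    rw [hhdef]
    simp only
    rw [harg]
    push_cast [Complex.ofReal_exp]
    ring_nf
  refine ⟨g, h, hgdiff, ⟨40000, hgbound⟩, hhdiff, ⟨2, hhbound⟩,
    fun n hn => ⟨hgnode n hn, hhnode n hn⟩, ?_, ?_⟩
  · intro x hx
    rw [hW] at hx
    obtain ⟨n, hn, rfl⟩ := hx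
    rw [hgnode n hn, hhnode n hn]
  · intro x hx
    rw [hV] at hx
    obtain ⟨n, hn, rfl⟩ := hx
    rw [hhnode n hn, hgnode n hn]
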